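/- Let G be a finite simple graph, k ≥ 1, and M a k-limited spanning subgraph of G. Every M-augmenting trail of minimum length among all M-augmenting trails in G has no repeated vertex visits v_i = v_j with i < j and j − i even. -/

import Mathlib

open SimpleGraph

variable {V : Type*}

/-- The degree of a vertex `v` in a (sub)graph `M`. -/
noncomputable def mdeg (M : SimpleGraph V) (v : V) : ℕ := (M.neighborSet v).ncard

/-- `M` is a `k`-limited spanning subgraph of `G`: a subgraph on all the vertices of `G`
with all degrees at most `k`. -/
def IsKLimitedSpanning (G M : SimpleGraph V) (k : ℕ) : Prop :=
  M ≤ G ∧ ∀ v : V, mdeg M v ≤ k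

/-- `F` is a `k`-factor of `G`: a spanning subgraph all of whose degrees equal `k`. -/
def IsKFactor (G F : SimpleGraph V) (k : ℕ) : Prop :=
  F ≤ G ∧ ∀ v : V, mdeg F v = k

/-- The deficiency `σ(M) = ∑_{v} (k - deg_M v)`. -/
noncomputable def sigmaDef [Fintype V] (M : SimpleGraph V) (k : ℕ) : ℕ :=
  ∑ v : V, (k - mdeg M v)

/-- An `M`-alternating trail: a trail whose consecutive edges alternate between
membership and non-membership in `E(M)`. -/
def IsAltTrail {G : SimpleGraph V} (M : SimpleGraph V) {u v : V} (p : G.Walk u v) : Prop :=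
  p.IsTrail ∧ ∀ (i : ℕ) (h : i + 1 < p.edges.length),
    ((p.edges[i]'(Nat.lt_of_succ_lt h)) ∈ M.edgeSet ↔ (p.edges[i+1]'h) ∉ M.edgeSet)

/-- An `M`-augmenting trail (with respect to the bound `k`): an `M`-alternating trail whose
first and last edges are not in `E(M)`, whose endpoints are unfilled in `M`, all of whose
inner vertex visits are filled in `M`, and which, if closed at `v₀ = u = v`, additionally
satisfies `deg_M v₀ < k - 1`. -/
def IsAugTrail (G M : SimpleGraph V) (k : ℕ) {u v : V} (p : G.Walk u v) : Prop :=
  IsAltTrail M p ∧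
  p.edges ≠ [] ∧
  (∀ e, p.edges.head? = some e → e ∉ M.edgeSet) ∧
  (∀ e, p.edges.getLast? = some e → e ∉ M.edgeSet) ∧
  mdeg M u < k ∧ mdeg M v < k ∧
  (∀ w ∈ p.support.tail.dropLast, mdeg M w = k) ∧
  (u = v → mdeg M u < k - 1)

variable {G : SimpleGraph V}

namespace AugAux

/-- Prefix of a walk: the first `n` darts. -/
def wtake : ∀ {u v : V} (p : G.Walk u v) (n : ℕ), G.Walk u (p.getVert n)
  | _, _, .nil, _ => .nil
  | _, _, .cons _ _, 0 => .nil
  | _, _, .cons h q, n+1 => .cons h (wtake q n)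

/-- Suffix of a walk: drop the first `n` darts. -/
def wdrop : ∀ {u v : V} (p : G.Walk u v) (n : ℕ), G.Walk (p.getVert n) v
  | _, _, .nil, _ => .nil
  | _, _, .cons h q, 0 => .cons h q
  | _, _, .cons _ q, n+1 => wdrop q n

lemma wtake_edges : ∀ {u v : V} (p : G.Walk u v) (n : ℕ),
    (wtake p n).edges = p.edges.take n
  | _, _, .nil, n => by simp [wtake]
  | _, _, .cons h q, 0 => by simp [wtake]; rfl
  | _, _, .cons h q, n+1 => by simp [wtake, wtake_edges q n]

lemma wdrop_edges : ∀ {u v : V} (p : G.Walk u v) (n : ℕ),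
    (wdrop p n).edges = p.edges.drop n
  | _, _, .nil, n => by simp [wdrop]
  | _, _, .cons h q, 0 => by simp [wdrop]; rfl
  | _, _, .cons h q, n+1 => by simp [wdrop, wdrop_edges q n]

lemma wtake_getVert : ∀ {u v : V} (p : G.Walk u v) {n m : ℕ}, m ≤ n →
    (wtake p n).getVert m = p.getVert m
  | _, _, .nil, n, m, _ => by simp [wtake]
  | _, _, .cons h q, 0, m, hm => by
      simp_all [wtake]; rfl
  | _, _, .cons h q, n+1, 0, _ => by simp [wtake]
  | _, _, .cons h q, n+1, m+1, hm => by
      simpa [wtake, SimpleGraph.Walk.getVert_cons_succ] using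
        wtake_getVert q (Nat.le_of_succ_le_succ hm)

lemma wdrop_getVert : ∀ {u v : V} (p : G.Walk u v) (n m : ℕ),
    (wdrop p n).getVert m = p.getVert (n + m)
  | _, _, .nil, n, m => rfl
  | _, _, .cons h q, 0, m => by simp [wdrop]; rfl
  | _, _, .cons h q, n+1, m => by
      simpa [wdrop, SimpleGraph.Walk.getVert_cons_succ, Nat.succ_add] using
        wdrop_getVert q n m

lemma getVert_mem_dropLast : ∀ {u v : V} (p : G.Walk u v) {m : ℕ}, m < p.length →
    p.getVert m ∈ p.support.dropLast
  | _, _, .nil, m, hm => by simp at hm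
  | _, _, .cons h q, 0, hm => by
      simp [SimpleGraph.Walk.support_cons,
        List.dropLast_cons_of_ne_nil q.support_ne_nil]
  | _, _, .cons h q, m+1, hm => by
      rw [SimpleGraph.Walk.support_cons,
        List.dropLast_cons_of_ne_nil q.support_ne_nil]
      exact List.mem_cons_of_mem _ (getVert_mem_dropLast q (by simpa using hm))

lemma getVert_mem_inner : ∀ {u v : V} (p : G.Walk u v) {m : ℕ}, 0 < m → m < p.length →
    p.getVert m ∈ p.support.tail.dropLast
  | _, _, .nil, m, _, hm => by simp at hm
  | _, _, .cons h q, m+1, _, hm => by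
      rw [SimpleGraph.Walk.support_cons, List.tail_cons]
      exact getVert_mem_dropLast q (by simpa using hm)

lemma mem_dropLast_getVert : ∀ {u v : V} (p : G.Walk u v) {x : V},
    x ∈ p.support.dropLast → ∃ m, m < p.length ∧ p.getVert m = x
  | _, _, .nil, x, hx => by simp at hx
  | _, _, .cons h q, x, hx => by
      rw [SimpleGraph.Walk.support_cons,
        List.dropLast_cons_of_ne_nil q.support_ne_nil] at hx
      rcases List.mem_cons.mp hx with hx1 | hx2
      · exact ⟨0, by simp, by simp [hx1]⟩
      · obtain ⟨m, hm, hg⟩ := mem_dropLast_getVert q hx2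
        exact ⟨m+1, by simpa using hm, by simpa [SimpleGraph.Walk.getVert_cons_succ]⟩

lemma mem_inner_getVert : ∀ {u v : V} (p : G.Walk u v) {x : V},
    x ∈ p.support.tail.dropLast → ∃ m, 0 < m ∧ m < p.length ∧ p.getVert m = x
  | _, _, .nil, x, hx => by simp at hx
  | _, _, .cons h q, x, hx => by
      rw [SimpleGraph.Walk.support_cons, List.tail_cons] at hx
      obtain ⟨m, hm, hg⟩ := mem_dropLast_getVert q hx
      exact ⟨m+1, Nat.succ_pos _, by simpa using hm,
        by simpa [SimpleGraph.Walk.getVert_cons_succ]⟩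

end AugAux

/-- An `M`-augmenting trail of minimum length among all `M`-augmenting
trails has no repeated vertex visits `v_i = v_j` with `i < j` and `j − i` even. -/
theorem min_augTrail_no_even_repeat [Fintype V] (G M : SimpleGraph V) (k : ℕ) (hk : 1 ≤ k)
    (hM : IsKLimitedSpanning G M k) {u w : V} (p : G.Walk u w)
    (hP : IsAugTrail G M k p)
    (hmin : ∀ (a b : V) (q : G.Walk a b), IsAugTrail G M k q → p.length ≤ q.length) :
    ∀ i j : ℕ, i < j → j ≤ p.length → Even (j - i) → p.getVert i ≠ p.getVert j := by
  intro i j hij hjle heven hEq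
  obtain ⟨⟨hT, hAlt⟩, hne, hhead, hlast, hu, hw, hinner, hclosed⟩ := hP
  have hEL : p.edges.length = p.length := p.length_edges
  have hLpos : 0 < p.length := by
    have := List.length_pos_iff.mpr hne; omega
  have hji0 : (j - i) % 2 = 0 := Nat.even_iff.mp heven
  -- parity characterization of edges of p
  have hppar : ∀ m (hm : m < p.edges.length),
      ((p.edges[m]'hm) ∈ M.edgeSet ↔ m % 2 = 1) := by
    intro m
    induction m with
    | zero =>
      intro hm
      have h0 : p.edges.head? = some (p.edges[0]'hm) := by
        rw [List.head?_eq_getElem?, List.getElem?_eq_getElem hm]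
      exact iff_of_false (hhead _ h0) (by omega)
    | succ m ih =>
      intro hm
      have hm' : m < p.edges.length := by omega
      have halt : ((p.edges[m]'hm') ∈ M.edgeSet ↔ (p.edges[m+1]'hm) ∉ M.edgeSet) :=
        hAlt m hm
      have ihm := ih hm'
      have h2 : ((m+1) % 2 = 1) ↔ ¬ (m % 2 = 1) := by omega
      rw [h2, ← ihm, halt, not_not]
  -- the length of p is odd
  have hL2 : p.length % 2 = 1 := by
    have hlt : p.edges.length - 1 < p.edges.length := by omega
    have hlastE : p.edges.getLast? = some (p.edges[p.edges.length - 1]'hlt) := by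
      rw [List.getLast?_eq_getLast hne, List.getLast_eq_getElem]
    have hnotM := hlast _ hlastE
    have hpar := hppar (p.edges.length - 1) hlt
    have : ¬ ((p.edges.length - 1) % 2 = 1) := fun hh => hnotM (hpar.mpr hh)
    omega
  have hiL : i < p.length := lt_of_lt_of_le hij hjle
  have hq1 : 1 ≤ i + (p.length - j) := by omega
  have hqlt : i + (p.length - j) < p.length := by omega
  -- the shorter walk
  set q : G.Walk u w :=
    (AugAux.wtake p i).append ((AugAux.wdrop p j).copy hEq.symm rfl) with hqdef
  have hAlen : (AugAux.wtake p i).length = i := by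
    rw [← SimpleGraph.Walk.length_edges, AugAux.wtake_edges, List.length_take, hEL]
    omega
  have hqE : q.edges = p.edges.take i ++ p.edges.drop j := by
    rw [hqdef, SimpleGraph.Walk.edges_append, SimpleGraph.Walk.edges_copy,
      AugAux.wtake_edges, AugAux.wdrop_edges]
  have hqElen : q.edges.length = i + (p.length - j) := by
    rw [hqE, List.length_append, List.length_take, List.length_drop, hEL]
    omega
  have hqlen : q.length = i + (p.length - j) := by
    rw [← SimpleGraph.Walk.length_edges, hqElen]
  have htl : (p.edges.take i).length = i := by
    rw [List.length_take, hEL]; omega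
  -- getVert of q
  have hqget : ∀ m, q.getVert m =
      if m < i then p.getVert m else p.getVert (j + (m - i)) := by
    intro m
    rw [hqdef, SimpleGraph.Walk.getVert_append, hAlen]
    by_cases hmi : m < i
    · rw [if_pos hmi, if_pos hmi, AugAux.wtake_getVert p (le_of_lt hmi)]
    · rw [if_neg hmi, if_neg hmi, SimpleGraph.Walk.getVert_copy,
        AugAux.wdrop_getVert]
  -- parity characterization of edges of q
  have hqpar : ∀ m (hm : m < q.edges.length),
      ((q.edges[m]'hm) ∈ M.edgeSet ↔ m % 2 = 1) := by
    intro m hm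
    have hm' : m < i + (p.length - j) := by rwa [hqElen] at hm
    by_cases hmi : m < i
    · have hmE : m < p.edges.length := by omega
      have e1 : (q.edges[m]'hm) = p.edges[m]'hmE := by
        simp only [hqE]
        rw [List.getElem_append_left (by omega : m < (p.edges.take i).length)]
        exact List.getElem_take
      rw [e1]; exact hppar m hmE
    · have hj2 : j + (m - i) < p.edges.length := by omega
      have e2 : (q.edges[m]'hm) = p.edges[j + (m - i)]'hj2 := by
        simp only [hqE]
        rw [List.getElem_append_right (by omega : (p.edges.take i).length ≤ m)]
        simp only [htl, List.getElem_drop]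
      rw [e2, hppar _ hj2]
      omega
  -- q's edges are distinct
  have hnodup : q.edges.Nodup := by
    have h1 : p.edges.drop j = (p.edges.drop i).drop (j - i) := by
      rw [List.drop_drop]; congr 1; omega
    have h1' : (p.edges.drop j).Sublist (p.edges.drop i) := by
      rw [h1]; exact List.drop_sublist _ _
    have h2 := h1'.append_left (p.edges.take i)
    rw [List.take_append_drop] at h2
    rw [hqE]
    exact h2.nodup hT.edges_nodup
  have hq0 : 0 < q.edges.length := by omega
  -- q is an augmenting trail
  have hqaug : IsAugTrail G M k q := by
    refine ⟨⟨⟨hnodup⟩, ?_⟩, ?_, ?_, ?_, hu, hw, ?_, hclosed⟩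
    · -- alternating
      intro m h
      have a1 : ((q.edges[m]'(Nat.lt_of_succ_lt h)) ∈ M.edgeSet ↔ m % 2 = 1) :=
        hqpar m (Nat.lt_of_succ_lt h)
      have a2 : ((q.edges[m+1]'h) ∈ M.edgeSet ↔ (m+1) % 2 = 1) := hqpar (m+1) h
      rw [a1, a2]
      omega
    · -- nonempty
      exact List.ne_nil_of_length_pos hq0
    · -- first edge not in M
      intro e he
      have h0 : q.edges.head? = some (q.edges[0]'hq0) := by
        rw [List.head?_eq_getElem?, List.getElem?_eq_getElem hq0]
      rw [h0] at he
      have he' : (q.edges[0]'hq0) = e := Option.some.inj he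
      subst he'
      intro hmem
      have := (hqpar 0 hq0).mp hmem
      omega
    · -- last edge not in M
      intro e he
      have hne' : q.edges ≠ [] := List.ne_nil_of_length_pos hq0
      have hlt : q.edges.length - 1 < q.edges.length := by omega
      have h0 : q.edges.getLast? = some (q.edges[q.edges.length - 1]'hlt) := by
        rw [List.getLast?_eq_getLast hne', List.getLast_eq_getElem]
      rw [h0] at he
      have he' : (q.edges[q.edges.length - 1]'hlt) = e := Option.some.inj he
      subst he'
      intro hmem
      have := (hqpar _ hlt).mp hmem
      omega
    · -- inner vertices are filled
      intro x hx
      obtain ⟨m, hm0, hmq, hgx⟩ := AugAux.mem_inner_getVert q hx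
      rw [hqget m] at hgx
      rw [hqlen] at hmq
      by_cases hmi : m < i
      · rw [if_pos hmi] at hgx
        exact hinner x (hgx ▸ AugAux.getVert_mem_inner p hm0 (by omega))
      · rw [if_neg hmi] at hgx
        exact hinner x
          (hgx ▸ AugAux.getVert_mem_inner p (by omega) (by omega))
  have := hmin u w q hqaug
  rw [hqlen] at this
  omega
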